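/- arXiv:0807.2058 — 2 statements merged into one kernel-verified Lean document; each statement's English description precedes it below -/
import Mathlib

section
/- Conformal flatness characterization by a quadratic curvature invariant: let R be an algebraic curvature tensor on an n-dimensional real inner product space (V,g) with n ≥ 4. Then |R|² − |cR|²/(n−2) + (c²R)²/(2(n−1)(n−2)) = 0 if and only if the Weyl part of R vanishes, i.e. R = gB for some symmetric bilinear form B on V. -/
/-!
Double forms on an `n`-dimensional real inner product space `(V, g)`, represented
by their components with respect to a (fixed) orthonormal basis: a `(p,q)`-double
form is determined by its values on pairs of increasingly ordered tuples of
distinct basis vectors, i.e. by a function `Finset (Fin n) → Finset (Fin n) → ℝ`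
(supported on pairs of sets of cardinalities `p` and `q`).
-/

open Finset

noncomputable section

abbrev DF (n : ℕ) := Finset (Fin n) → Finset (Fin n) → ℝ

namespace DF

variable {n : ℕ}

/-- The sign of the shuffle placing the increasing enumeration of `A` before that of
`B` and reordering increasingly. -/
def shuffleSign (A B : Finset (Fin n)) : ℝ :=
  (-1 : ℝ) ^ ∑ a ∈ A, (B.filter fun b => b < a).card

/-- The exterior product of double forms (Kulkarni–Nomizu type product), in components. -/
def mul (ω θ : DF n) : DF n := fun S T =>
  ∑ A ∈ S.powerset, ∑ C ∈ T.powerset,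
    shuffleSign A (S \ A) * shuffleSign C (T \ C) * ω A C * θ (S \ A) (T \ C)

/-- The `(0,0)`-double form `1`. -/
def one (n : ℕ) : DF n := fun S T => if S = ∅ ∧ T = ∅ then 1 else 0

/-- Powers `ω^k` of a double form with respect to the exterior product. -/
def pow (ω : DF n) : ℕ → DF n
  | 0 => one n
  | k + 1 => mul (pow ω k) ω

/-- The contraction `c ω`, obtained by summing, over an orthonormal basis, the
insertion of the basis vector as first argument in both slots. -/
def contr (ω : DF n) : DF n := fun S T =>
  ∑ i : Fin n,
    if i ∈ S ∨ i ∈ T then 0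
    else shuffleSign {i} S * shuffleSign {i} T * ω (insert i S) (insert i T)

/-- The iterated contraction `c^r`. -/
def contrN (r : ℕ) (ω : DF n) : DF n := contr^[r] ω

/-- The metric `g` as a `(1,1)`-double form (components in an orthonormal basis). -/
def gm (n : ℕ) : DF n := fun S T => if S = T ∧ S.card = 1 then 1 else 0

/-- The inner product of double forms induced by `g`. -/
def dinner (ω θ : DF n) : ℝ :=
  ∑ S : Finset (Fin n), ∑ T : Finset (Fin n), ω S T * θ S T

/-- The scalar given by a `(0,0)`-double form. -/
def toScalar (ω : DF n) : ℝ := ω ∅ ∅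

open scoped Classical in
/-- `σ_k` of a `(1,1)`-double form: the `k`-th elementary symmetric function of the
eigenvalues of the corresponding self-adjoint endomorphism (whose matrix in the
orthonormal basis is the matrix of components). -/
def sigma (k : ℕ) (ω : DF n) : ℝ :=
  if h : (Matrix.of fun i j => ω {i} {j} : Matrix (Fin n) (Fin n) ℝ).IsHermitian then
    ∑ s ∈ Finset.powersetCard k (Finset.univ : Finset (Fin n)), ∏ i ∈ s, h.eigenvalues i
  else 0

/-- `ω` is a `(p,p)`-double form: its components are supported in bidegree `(p,p)`. -/
def IsDeg (p : ℕ) (ω : DF n) : Prop := ∀ S T, ω S T ≠ 0 → S.card = p ∧ T.card = p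

/-- Symmetry of a double form: `ω(a;b) = ω(b;a)`. -/
def IsSymm (ω : DF n) : Prop := ∀ S T, ω S T = ω T S

/-- The first Bianchi identity for a `(p,p)`-double form (in components): the complete
antisymmetrization over the first `p+1` vector arguments vanishes. -/
def FirstBianchi (p : ℕ) (ω : DF n) : Prop :=
  ∀ U T : Finset (Fin n), U.card = p + 1 → T.card = p - 1 →
    ∑ i ∈ U,
      (if i ∈ T then 0
       else shuffleSign {i} (U.erase i) * shuffleSign {i} T * ω (U.erase i) (insert i T)) = 0

end DF

section Geometry

variable {n : ℕ} {V : Type*} [NormedAddCommGroup V] [InnerProductSpace ℝ V]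

/-- The components, in the orthonormal basis `e`, of a `(p,p)`-double form given as a
function of `p + p` vector arguments. -/
def ofForm (e : OrthonormalBasis (Fin n) ℝ V) (p : ℕ)
    (ω : (Fin p → V) → (Fin p → V) → ℝ) : DF n := fun S T =>
  if h : S.card = p ∧ T.card = p then
    ω (fun i => e ((S.orderIsoOfFin h.1 i : Fin n)))
      (fun i => e ((T.orderIsoOfFin h.2 i : Fin n)))
  else 0

/-- The components of a bilinear form, viewed as a `(1,1)`-double form. -/
def ofBilin (e : OrthonormalBasis (Fin n) ℝ V) (b : V → V → ℝ) : DF n :=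
  ofForm e 1 fun x y => b (x 0) (y 0)

/-- The components of a `(2,2)`-double form given as a function of four vectors. -/
def ofCurv (e : OrthonormalBasis (Fin n) ℝ V) (R : V → V → V → V → ℝ) : DF n :=
  ofForm e 2 fun x y => R (x 0) (x 1) (y 0) (y 1)

/-- Bilinearity of a real-valued function of two vector arguments. -/
def IsBilin (b : V → V → ℝ) : Prop :=
  (∀ (c : ℝ) (x x' y : V), b (c • x + x') y = c * b x y + b x' y) ∧
  (∀ (c : ℝ) (x y y' : V), b x (c • y + y') = c * b x y + b x y')

/-- Symmetry of a bilinear form. -/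
def IsSymmBilin (b : V → V → ℝ) : Prop := ∀ x y, b x y = b y x

/-- An algebraic curvature tensor: a multilinear form of four vectors, antisymmetric
in the first two arguments, symmetric under exchange of the two pairs, and satisfying
the first Bianchi identity. -/
structure IsCurv (R : V → V → V → V → ℝ) : Prop where
  linear : ∀ (c : ℝ) (x x' y z w : V), R (c • x + x') y z w = c * R x y z w + R x' y z w
  antisymm : ∀ x y z w, R x y z w = - R y x z w
  pair_symm : ∀ x y z w, R x y z w = R z w x y
  bianchi : ∀ x y z w, R x y z w + R y z x w + R z x y w = 0

/-- Multilinearity of a real-valued function of `p` vector arguments. -/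
def IsMultilinear (p : ℕ) (f : (Fin p → V) → ℝ) : Prop :=
  ∀ (x : Fin p → V) (i : Fin p) (c : ℝ) (u v : V),
    f (Function.update x i (c • u + v)) =
      c * f (Function.update x i u) + f (Function.update x i v)

/-- A function of `p` vector arguments is alternating. -/
def IsAlt (p : ℕ) (f : (Fin p → V) → ℝ) : Prop :=
  ∀ (x : Fin p → V) (i j : Fin p), i ≠ j → x i = x j → f x = 0

/-- A `(p,p)`-double form, as a function of `p + p` vector arguments:
multilinear and alternating in each of the two blocks of arguments. -/
def IsDoubleForm (p : ℕ) (ω : (Fin p → V) → (Fin p → V) → ℝ) : Prop :=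
  (∀ y, IsMultilinear p fun x => ω x y) ∧ (∀ y, IsAlt p fun x => ω x y) ∧
  (∀ x, IsMultilinear p fun y => ω x y) ∧ (∀ x, IsAlt p fun y => ω x y)

/-- Symmetry of a `(p,p)`-double form: `ω(x;y) = ω(y;x)`. -/
def IsSymmForm (p : ℕ) (ω : (Fin p → V) → (Fin p → V) → ℝ) : Prop := ∀ x y, ω x y = ω y x

/-- The first Bianchi identity for a `(p,p)`-double form of vector arguments:
the complete antisymmetrization over the first `p+1` vector arguments vanishes. -/
def FirstBianchiForm (p : ℕ) (hp : 0 < p) (ω : (Fin p → V) → (Fin p → V) → ℝ) : Prop :=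
  ∀ (z : Fin (p + 1) → V) (y : Fin p → V),
    ∑ σ : Equiv.Perm (Fin (p + 1)),
      ((Equiv.Perm.sign σ : ℤ) : ℝ) *
        ω (fun i => z (σ (Fin.castSucc i))) (Function.update y ⟨0, hp⟩ (z (σ (Fin.last p)))) = 0

/-- The scalar curvature `Scal = c²R` of a `(2,2)`-double form (in components). -/
def scalDF {n : ℕ} (Rd : DF n) : ℝ := DF.toScalar (DF.contrN 2 Rd)

/-- The `2k`-th Gauss–Bonnet curvature `h_{2k} = c^{2k} R^k / (2k)!`. -/
def h2kDF {n : ℕ} (k : ℕ) (Rd : DF n) : ℝ :=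
  DF.toScalar (DF.contrN (2 * k) (DF.pow Rd k)) / ((2 * k).factorial : ℝ)

/-- The second Gauss–Bonnet curvature `h₄ = c⁴ R² / 4!`. -/
def h4DF {n : ℕ} (Rd : DF n) : ℝ :=
  DF.toScalar (DF.contrN 4 (DF.pow Rd 2)) / (Nat.factorial 4 : ℝ)

end Geometry

end


set_option linter.unusedSectionVars false

namespace Aux
variable {n : ℕ}
/-- Sum over all finsets of a card-1-supported function. -/
lemma sum1 (f : Finset (Fin n) → ℝ) (hf : ∀ S, S.card ≠ 1 → f S = 0) :
    ∑ S : Finset (Fin n), f S = ∑ i : Fin n, f {i} := by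
  have key : (∑ i : Fin n, f ({i} : Finset (Fin n))) = ∑ S ∈ (univ : Finset (Fin n)).powersetCard 1, f S := by
    refine Finset.sum_nbij (fun i : Fin n => ({i} : Finset (Fin n))) ?_ ?_ ?_ ?_
    · intro a _; simp [Finset.mem_powersetCard]
    · intro a _ b _ h; exact Finset.singleton_injective h
    · intro S hS
      rw [Finset.mem_coe, Finset.mem_powersetCard] at hS
      obtain ⟨i, rfl⟩ := Finset.card_eq_one.1 hS.2
      exact ⟨i, by simp, rfl⟩
    · intro a _; rfl
  rw [key]
  refine (Finset.sum_subset (Finset.subset_univ _) ?_).symm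
  intro S _ hS
  refine hf S fun h => hS ?_
  simp [Finset.mem_powersetCard, h]

/-- Sum over all finsets of a card-2-supported function, as a sum over ordered pairs. -/
lemma sum2 (f : Finset (Fin n) → ℝ) (hf : ∀ S, S.card ≠ 2 → f S = 0) :
    ∑ S : Finset (Fin n), f S = ∑ i : Fin n, ∑ j : Fin n, if i < j then f {i, j} else 0 := by
  have h1 : ∑ S : Finset (Fin n), f S = ∑ S ∈ (univ : Finset (Fin n)).powersetCard 2, f S := by
    refine (Finset.sum_subset (Finset.subset_univ _) ?_).symm
    intro S _ hS
    refine hf S fun h => hS ?_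
    simp [Finset.mem_powersetCard, h]
  rw [h1]
  have h2 : (∑ i : Fin n, ∑ j : Fin n, if i < j then f {i, j} else 0)
      = ∑ p ∈ (univ : Finset (Fin n × Fin n)).filter (fun p => p.1 < p.2), f {p.1, p.2} := by
    rw [Finset.sum_filter]
    exact (Fintype.sum_prod_type fun p : Fin n × Fin n =>
      if p.1 < p.2 then f {p.1, p.2} else 0).symm
  rw [h2]
  refine (Finset.sum_nbij (fun p : Fin n × Fin n => ({p.1, p.2} : Finset (Fin n))) ?_ ?_ ?_ ?_).symm
  · intro p hp
    simp only [Finset.mem_filter] at hp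
    simp [Finset.mem_powersetCard, Finset.card_insert_of_notMem, hp.2.ne]
  · intro p hp q hq h
    replace h : ({p.1, p.2} : Finset (Fin n)) = ({q.1, q.2} : Finset (Fin n)) := h
    rw [Finset.mem_coe, Finset.mem_filter] at hp hq
    have h1 : p.1 ∈ ({q.1, q.2} : Finset (Fin n)) := by rw [← h]; simp
    have h2 : p.2 ∈ ({q.1, q.2} : Finset (Fin n)) := by rw [← h]; simp
    have h3 : q.1 ∈ ({p.1, p.2} : Finset (Fin n)) := by rw [h]; simp
    simp only [Finset.mem_insert, Finset.mem_singleton] at h1 h2 h3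
    have hp2 := hp.2; have hq2 := hq.2
    rw [Fin.lt_def] at hp2 hq2
    have e1 : p.1.val = q.1.val ∨ p.1.val = q.2.val := by
      rcases h1 with h1 | h1 <;> [left; right] <;> rw [h1]
    have e2 : p.2.val = q.1.val ∨ p.2.val = q.2.val := by
      rcases h2 with h2 | h2 <;> [left; right] <;> rw [h2]
    have e3 : q.1.val = p.1.val ∨ q.1.val = p.2.val := by
      rcases h3 with h3 | h3 <;> [left; right] <;> rw [h3]
    have : p.1.val = q.1.val ∧ p.2.val = q.2.val := by omega
    exact Prod.ext (Fin.val_injective this.1) (Fin.val_injective this.2)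
  · intro S hS
    rw [Finset.mem_coe, Finset.mem_powersetCard] at hS
    obtain ⟨a, b, hab, rfl⟩ := Finset.card_eq_two.1 hS.2
    rcases lt_or_gt_of_ne hab with h | h
    · exact ⟨(a, b), by simp [h], rfl⟩
    · exact ⟨(b, a), by simp [h], by simp [Finset.pair_comm]⟩
  · intro p _; rfl

/-- Halving a symmetric, diagonal-free double sum. -/
lemma half (g : Fin n → Fin n → ℝ) (hsymm : ∀ i j, g i j = g j i) (hdiag : ∀ i, g i i = 0) :
    ∑ i : Fin n, ∑ j : Fin n, (if i < j then g i j else 0)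
      = (∑ i : Fin n, ∑ j : Fin n, g i j) / 2 := by
  have key : ∀ i j : Fin n, g i j = (if i < j then g i j else 0) + (if j < i then g i j else 0) := by
    intro i j
    rcases lt_trichotomy i j with h | h | h
    · simp [h, not_lt_of_gt h]
    · simp [h, hdiag]
    · simp [h, not_lt_of_gt h]
  have : ∑ i : Fin n, ∑ j : Fin n, g i j
      = (∑ i : Fin n, ∑ j : Fin n, (if i < j then g i j else 0))
        + ∑ i : Fin n, ∑ j : Fin n, (if j < i then g i j else 0) := by
    rw [← Finset.sum_add_distrib]
    refine Finset.sum_congr rfl fun i _ => ?_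
    rw [← Finset.sum_add_distrib]
    exact Finset.sum_congr rfl fun j _ => key i j
  have swap : ∑ i : Fin n, ∑ j : Fin n, (if j < i then g i j else 0)
      = ∑ i : Fin n, ∑ j : Fin n, (if i < j then g i j else 0) := by
    rw [Finset.sum_comm]
    refine Finset.sum_congr rfl fun i _ => Finset.sum_congr rfl fun j _ => ?_
    rcases lt_or_ge i j with h | h
    · simp [h, hsymm i j]
    · simp [not_lt_of_ge h]
  rw [this, swap]; ring

/-- Kronecker delta. -/
def dd (i j : Fin n) : ℝ := if i = j then 1 else 0

lemma dd_symm (i j : Fin n) : dd i j = dd j i := by simp [dd, eq_comm]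

lemma sum_dd_left (i : Fin n) (f : Fin n → ℝ) : ∑ k, dd i k * f k = f i := by
  simp [dd, ite_mul, Finset.sum_ite_eq]

lemma sum_dd_right (i : Fin n) (f : Fin n → ℝ) : ∑ k, dd k i * f k = f i := by
  simp [dd, ite_mul, Finset.sum_ite_eq']

lemma rot3 (X : Fin n → Fin n → Fin n → ℝ) :
    ∑ i, ∑ j, ∑ l, X i j l = ∑ j, ∑ l, ∑ i, X i j l := by
  rw [Finset.sum_comm]
  exact Finset.sum_congr rfl fun j _ => Finset.sum_comm

/-- collapse of `δ` in positions 1,3 of a quadruple sum -/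
lemma M13 (G : Fin n → Fin n → Fin n → Fin n → ℝ) :
    ∑ i, ∑ j, ∑ k, ∑ l, dd i k * G i j k l = ∑ i, ∑ j, ∑ l, G i j i l := by
  refine Finset.sum_congr rfl fun i _ => Finset.sum_congr rfl fun j _ => ?_
  rw [Finset.sum_comm]
  refine Finset.sum_congr rfl fun l _ => ?_
  exact sum_dd_left i fun k => G i j k l

lemma M24 (G : Fin n → Fin n → Fin n → Fin n → ℝ) :
    ∑ i, ∑ j, ∑ k, ∑ l, dd j l * G i j k l = ∑ i, ∑ j, ∑ k, G i j k j := by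
  refine Finset.sum_congr rfl fun i _ => Finset.sum_congr rfl fun j _ =>
    Finset.sum_congr rfl fun k _ => ?_
  exact sum_dd_left j fun l => G i j k l

lemma M14 (G : Fin n → Fin n → Fin n → Fin n → ℝ) :
    ∑ i, ∑ j, ∑ k, ∑ l, dd i l * G i j k l = ∑ i, ∑ j, ∑ k, G i j k i := by
  refine Finset.sum_congr rfl fun i _ => Finset.sum_congr rfl fun j _ =>
    Finset.sum_congr rfl fun k _ => ?_
  exact sum_dd_left i fun l => G i j k l

lemma M23 (G : Fin n → Fin n → Fin n → Fin n → ℝ) :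
    ∑ i, ∑ j, ∑ k, ∑ l, dd j k * G i j k l = ∑ i, ∑ j, ∑ l, G i j j l := by
  refine Finset.sum_congr rfl fun i _ => Finset.sum_congr rfl fun j _ => ?_
  rw [Finset.sum_comm]
  refine Finset.sum_congr rfl fun l _ => ?_
  exact sum_dd_left j fun k => G i j k l

/-- Kulkarni–Nomizu product of `g` with `b`, in components. -/
def KN (b : Fin n → Fin n → ℝ) (i j k l : Fin n) : ℝ :=
  dd i k * b j l + dd j l * b i k - dd i l * b j k - dd j k * b i l

/-- Ricci contraction. -/
def RicOf (r : Fin n → Fin n → Fin n → Fin n → ℝ) (j l : Fin n) : ℝ := ∑ i, r i j i l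

def trb (b : Fin n → Fin n → ℝ) : ℝ := ∑ i, b i i
def nb2 (b : Fin n → Fin n → ℝ) : ℝ := ∑ i, ∑ j, b i j ^ 2
def ipc (r : Fin n → Fin n → Fin n → Fin n → ℝ) (b : Fin n → Fin n → ℝ) : ℝ :=
  ∑ j, ∑ l, RicOf r j l * b j l

section
variable (r : Fin n → Fin n → Fin n → Fin n → ℝ)
  (a1 : ∀ i j k l, r i j k l = - r j i k l)
  (ps : ∀ i j k l, r i j k l = r k l i j)

include a1 ps in
lemma a2 : ∀ i j k l, r i j k l = - r i j l k := by
  intro i j k l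
  rw [ps, a1, ps l k i j]

include a1 ps in
lemma ric_symm : ∀ j l, RicOf r j l = RicOf r l j := by
  intro j l
  exact Finset.sum_congr rfl fun i _ => ps i j i l

include a1 in
lemma diag1 : ∀ i k l, r i i k l = 0 := by
  intro i k l
  have := a1 i i k l
  linarith

include a1 ps in
lemma diag2 : ∀ i j k, r i j k k = 0 := by
  intro i j k
  have := a2 r a1 ps i j k k
  linarith

include a1 ps in
/-- The key contraction identity `⟨r, g·b⟩ = 4⟨Ric r, b⟩`. -/
lemma L1 (b : Fin n → Fin n → ℝ) (hb : ∀ i j, b i j = b j i) :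
    ∑ i, ∑ j, ∑ k, ∑ l, r i j k l * KN b i j k l = 4 * ipc r b := by
  have expand : ∀ i j k l : Fin n, r i j k l * KN b i j k l
      = dd i k * (r i j k l * b j l) + dd j l * (r i j k l * b i k)
        - dd i l * (r i j k l * b j k) - dd j k * (r i j k l * b i l) := by
    intro i j k l; simp only [KN]; ring
  have e1 : ∑ i, ∑ j, ∑ k, ∑ l, r i j k l * KN b i j k l
      = (∑ i, ∑ j, ∑ k, ∑ l, dd i k * (r i j k l * b j l))
        + (∑ i, ∑ j, ∑ k, ∑ l, dd j l * (r i j k l * b i k))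
        - (∑ i, ∑ j, ∑ k, ∑ l, dd i l * (r i j k l * b j k))
        - (∑ i, ∑ j, ∑ k, ∑ l, dd j k * (r i j k l * b i l)) := by
    simp only [← Finset.sum_add_distrib, ← Finset.sum_sub_distrib]
    exact Finset.sum_congr rfl fun i _ => Finset.sum_congr rfl fun j _ =>
      Finset.sum_congr rfl fun k _ => Finset.sum_congr rfl fun l _ => expand i j k l
  rw [e1, M13, M24, M14, M23]
  -- Term 1
  have T1 : ∑ i, ∑ j, ∑ l, r i j i l * b j l = ipc r b := by
    rw [rot3]
    refine Finset.sum_congr rfl fun j _ => Finset.sum_congr rfl fun l _ => ?_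
    rw [RicOf, Finset.sum_mul]
  -- Term 2 : ∑ i j k, r i j k j * b i k
  have T2 : ∑ i, ∑ j, ∑ k, r i j k j * b i k = ipc r b := by
    have h : ∀ i j k : Fin n, r i j k j * b i k = r j i j k * b i k := by
      intro i j k
      rw [a1, a2 r a1 ps j i k j]; ring
    calc ∑ i, ∑ j, ∑ k, r i j k j * b i k = ∑ i, ∑ j, ∑ k, r j i j k * b i k :=
          Finset.sum_congr rfl fun i _ => Finset.sum_congr rfl fun j _ =>
            Finset.sum_congr rfl fun k _ => h i j k
      _ = ∑ i, ∑ k, ∑ j, r j i j k * b i k :=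
          Finset.sum_congr rfl fun i _ => Finset.sum_comm
      _ = ipc r b := by
          refine Finset.sum_congr rfl fun i _ => Finset.sum_congr rfl fun k _ => ?_
          rw [RicOf, Finset.sum_mul]
  -- Term 3 : ∑ i j k, r i j k i * b j k  = - ipc
  have T3 : ∑ i, ∑ j, ∑ k, r i j k i * b j k = - ipc r b := by
    have h : ∀ i j k : Fin n, r i j k i * b j k = -(r i k i j * b j k) := by
      intro i j k
      rw [ps i j k i, a1 k i i j]; ring
    calc ∑ i, ∑ j, ∑ k, r i j k i * b j k = ∑ i, ∑ j, ∑ k, -(r i k i j * b j k) :=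
          Finset.sum_congr rfl fun i _ => Finset.sum_congr rfl fun j _ =>
            Finset.sum_congr rfl fun k _ => h i j k
      _ = - ∑ i, ∑ j, ∑ k, r i k i j * b j k := by
          simp only [Finset.sum_neg_distrib]
      _ = - ipc r b := by
          congr 1
          rw [rot3 fun i j k => r i k i j * b j k]
          refine Finset.sum_congr rfl fun j _ => Finset.sum_congr rfl fun k _ => ?_
          rw [show RicOf r j k = RicOf r k j from ric_symm r a1 ps j k, RicOf, Finset.sum_mul]
  -- Term 4 : ∑ i j l, r i j j l * b i l = - ipc
  have T4 : ∑ i, ∑ j, ∑ l, r i j j l * b i l = - ipc r b := by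
    have h : ∀ i j l : Fin n, r i j j l * b i l = -(r j i j l * b i l) := by
      intro i j l
      rw [a1 i j j l]; ring
    calc ∑ i, ∑ j, ∑ l, r i j j l * b i l = ∑ i, ∑ j, ∑ l, -(r j i j l * b i l) :=
          Finset.sum_congr rfl fun i _ => Finset.sum_congr rfl fun j _ =>
            Finset.sum_congr rfl fun l _ => h i j l
      _ = - ∑ i, ∑ j, ∑ l, r j i j l * b i l := by
          simp only [Finset.sum_neg_distrib]
      _ = - ipc r b := by
          congr 1
          rw [show (∑ i, ∑ j, ∑ l, r j i j l * b i l) = ∑ i, ∑ l, ∑ j, r j i j l * b i l from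
            Finset.sum_congr rfl fun i _ => Finset.sum_comm]
          refine Finset.sum_congr rfl fun i _ => Finset.sum_congr rfl fun l _ => ?_
          rw [RicOf, Finset.sum_mul]
  rw [T1, T2, T3, T4]; ring
end

section
variable (b : Fin n → Fin n → ℝ) (hb : ∀ i j, b i j = b j i)

lemma KN_a1 : ∀ i j k l, KN b i j k l = - KN b j i k l := by
  intro i j k l; simp only [KN]; ring

include hb in
lemma KN_ps : ∀ i j k l, KN b i j k l = KN b k l i j := by
  intro i j k l
  simp only [KN]
  rw [dd_symm i k, dd_symm j l, dd_symm i l, dd_symm j k, hb j l, hb i k, hb j k, hb i l]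
  ring

include hb in
lemma RicKN : ∀ j l, RicOf (KN b) j l = ((n : ℝ) - 2) * b j l + trb b * dd j l := by
  intro j l
  have h : ∀ i : Fin n, KN b i j i l
      = b j l + dd j l * b i i - dd i l * b j i - dd j i * b i l := by
    intro i; simp [KN, dd]
  rw [RicOf]
  calc ∑ i, KN b i j i l
      = ∑ i, (b j l + dd j l * b i i - dd i l * b j i - dd j i * b i l) :=
        Finset.sum_congr rfl fun i _ => h i
    _ = (∑ _i : Fin n, b j l) + dd j l * ∑ i, b i i
        - (∑ i, dd i l * b j i) - ∑ i, dd j i * b i l := by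
        simp only [← Finset.sum_add_distrib, ← Finset.sum_sub_distrib, Finset.mul_sum]
    _ = (n : ℝ) * b j l + dd j l * trb b - b j l - b j l := by
        rw [Finset.sum_const, Finset.card_univ, Fintype.card_fin, nsmul_eq_mul]
        rw [sum_dd_right l fun i => b j i, sum_dd_left j fun i => b i l, trb, hb j l]
    _ = ((n : ℝ) - 2) * b j l + trb b * dd j l := by ring

include hb in
lemma sum_dd_b : ∑ j, ∑ l, dd j l * b j l = trb b := by
  rw [trb]
  exact Finset.sum_congr rfl fun j _ => sum_dd_left j fun l => b j l

include hb in
lemma L2 : ∑ i, ∑ j, ∑ k, ∑ l, KN b i j k l * KN b i j k l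
    = 4 * (((n : ℝ) - 2) * nb2 b + trb b ^ 2) := by
  rw [L1 (KN b) (KN_a1 b) (KN_ps b hb) b hb]
  have : ipc (KN b) b = ((n : ℝ) - 2) * nb2 b + trb b ^ 2 := by
    rw [ipc]
    calc ∑ j, ∑ l, RicOf (KN b) j l * b j l
        = ∑ j, ∑ l, (((n : ℝ) - 2) * b j l ^ 2 + trb b * (dd j l * b j l)) := by
          refine Finset.sum_congr rfl fun j _ => Finset.sum_congr rfl fun l _ => ?_
          rw [RicKN b hb j l]; ring
      _ = ((n : ℝ) - 2) * nb2 b + trb b * ∑ j, ∑ l, dd j l * b j l := by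
          simp only [← Finset.sum_add_distrib, Finset.mul_sum, nb2]
      _ = ((n : ℝ) - 2) * nb2 b + trb b ^ 2 := by rw [sum_dd_b b hb]; ring
  rw [this]
end

section
variable (r : Fin n → Fin n → Fin n → Fin n → ℝ)
  (a1 : ∀ i j k l, r i j k l = - r j i k l)
  (ps : ∀ i j k l, r i j k l = r k l i j)

include a1 ps in
/-- Expansion of `∑ (r - g·b)²`. -/
lemma KEY (b : Fin n → Fin n → ℝ) (hb : ∀ i j, b i j = b j i) :
    ∑ i, ∑ j, ∑ k, ∑ l, (r i j k l - KN b i j k l) ^ 2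
      = (∑ i, ∑ j, ∑ k, ∑ l, r i j k l ^ 2) - 8 * ipc r b
        + 4 * (((n : ℝ) - 2) * nb2 b + trb b ^ 2) := by
  have expand : ∀ i j k l : Fin n, (r i j k l - KN b i j k l) ^ 2
      = r i j k l ^ 2 - 2 * (r i j k l * KN b i j k l) + KN b i j k l * KN b i j k l := by
    intro i j k l; ring
  calc ∑ i, ∑ j, ∑ k, ∑ l, (r i j k l - KN b i j k l) ^ 2
      = (∑ i, ∑ j, ∑ k, ∑ l, r i j k l ^ 2)
        - 2 * (∑ i, ∑ j, ∑ k, ∑ l, r i j k l * KN b i j k l)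
        + ∑ i, ∑ j, ∑ k, ∑ l, KN b i j k l * KN b i j k l := by
        simp only [← Finset.sum_add_distrib, ← Finset.sum_sub_distrib, Finset.mul_sum]
        exact Finset.sum_congr rfl fun i _ => Finset.sum_congr rfl fun j _ =>
          Finset.sum_congr rfl fun k _ => Finset.sum_congr rfl fun l _ => expand i j k l
    _ = _ := by rw [L1 r a1 ps b hb, L2 b hb]; ring

end

lemma sum_dd_univ : ∑ j : Fin n, ∑ l : Fin n, dd j l = (n : ℝ) := by
  have : ∀ j : Fin n, ∑ l, dd j l = 1 := by
    intro j
    have := sum_dd_left j (fun _ : Fin n => (1 : ℝ))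
    simpa using this
  rw [Finset.sum_congr rfl fun j _ => this j]
  simp

lemma split3 (X Y Z : Fin n → Fin n → ℝ) :
    ∑ j, ∑ l, (X j l - Y j l + Z j l)
      = (∑ j, ∑ l, X j l) - (∑ j, ∑ l, Y j l) + ∑ j, ∑ l, Z j l := by
  rw [← Finset.sum_sub_distrib, ← Finset.sum_add_distrib]
  exact Finset.sum_congr rfl fun j _ => by
    rw [← Finset.sum_sub_distrib, ← Finset.sum_add_distrib]

lemma sum4_sq_zero (f : Fin n → Fin n → Fin n → Fin n → ℝ)
    (h : ∑ i, ∑ j, ∑ k, ∑ l, f i j k l ^ 2 = 0) : ∀ i j k l, f i j k l = 0 := by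
  intro i j k l
  have h1 := (Finset.sum_eq_zero_iff_of_nonneg (fun x _ => Finset.sum_nonneg fun y _ =>
    Finset.sum_nonneg fun z _ => Finset.sum_nonneg fun w _ => sq_nonneg _)).1 h i (mem_univ i)
  have h2 := (Finset.sum_eq_zero_iff_of_nonneg (fun y _ =>
    Finset.sum_nonneg fun z _ => Finset.sum_nonneg fun w _ => sq_nonneg _)).1 h1 j (mem_univ j)
  have h3 := (Finset.sum_eq_zero_iff_of_nonneg (fun z _ =>
    Finset.sum_nonneg fun w _ => sq_nonneg _)).1 h2 k (mem_univ k)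
  have h4 := (Finset.sum_eq_zero_iff_of_nonneg (fun w _ => sq_nonneg _)).1 h3 l (mem_univ l)
  exact sq_eq_zero_iff.1 h4

section
variable (r : Fin n → Fin n → Fin n → Fin n → ℝ)
  (a1 : ∀ i j k l, r i j k l = - r j i k l)
  (ps : ∀ i j k l, r i j k l = r k l i j)

include a1 ps in
lemma forward_core (hn : 4 ≤ n)
    (hQ : (∑ i, ∑ j, ∑ k, ∑ l, r i j k l ^ 2) / 4
        - nb2 (RicOf r) / ((n : ℝ) - 2)
        + trb (RicOf r) ^ 2 / (2 * ((n : ℝ) - 1) * ((n : ℝ) - 2)) = 0) :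
    ∃ b : Fin n → Fin n → ℝ, (∀ i j, b i j = b j i) ∧ ∀ i j k l, r i j k l = KN b i j k l := by
  have hn1 : ((n : ℝ) - 1) ≠ 0 := by
    have : (4 : ℝ) ≤ (n : ℝ) := by exact_mod_cast hn
    linarith
  have hn2 : ((n : ℝ) - 2) ≠ 0 := by
    have : (4 : ℝ) ≤ (n : ℝ) := by exact_mod_cast hn
    linarith
  set Rc := RicOf r with hRc
  set s := trb Rc with hs
  set B2 := nb2 Rc with hB2
  set A := ∑ i, ∑ j, ∑ k, ∑ l, r i j k l ^ 2 with hA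
  set c : ℝ := s / (2 * ((n : ℝ) - 1)) with hc
  set b : Fin n → Fin n → ℝ := fun j l => (Rc j l - c * dd j l) / ((n : ℝ) - 2) with hbdef
  have hb : ∀ i j, b i j = b j i := by
    intro i j
    simp only [hbdef]
    rw [hRc, ric_symm r a1 ps i j, dd_symm i j]
  have hddRc : ∑ j, ∑ l, dd j l * Rc j l = s := by
    rw [hs, trb]
    exact Finset.sum_congr rfl fun j _ => sum_dd_left j fun l => Rc j l
  have hipc : ipc r b = (B2 - c * s) / ((n : ℝ) - 2) := by
    rw [ipc]
    calc ∑ j, ∑ l, Rc j l * b j l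
        = ∑ j, ∑ l, (Rc j l ^ 2 / ((n:ℝ)-2) - (c / ((n:ℝ)-2)) * (dd j l * Rc j l)) := by
          refine Finset.sum_congr rfl fun j _ => Finset.sum_congr rfl fun l _ => ?_
          simp only [hbdef]; field_simp
      _ = B2 / ((n:ℝ)-2) - (c / ((n:ℝ)-2)) * ∑ j, ∑ l, dd j l * Rc j l := by
          simp only [← Finset.sum_sub_distrib, Finset.mul_sum, hB2, nb2, Finset.sum_div]
      _ = (B2 - c * s) / ((n : ℝ) - 2) := by rw [hddRc]; ring
  have hdd2 : ∀ j l : Fin n, dd j l ^ 2 = dd j l := by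
    intro j l; simp only [dd]; split <;> norm_num
  have hnb2 : nb2 b = (B2 - 2 * c * s + c ^ 2 * (n : ℝ)) / ((n : ℝ) - 2) ^ 2 := by
    rw [nb2]
    calc ∑ j, ∑ l, b j l ^ 2
        = ∑ j, ∑ l, ((Rc j l ^ 2 - 2 * c * (dd j l * Rc j l) + c ^ 2 * dd j l) / ((n:ℝ)-2)^2) := by
          refine Finset.sum_congr rfl fun j _ => Finset.sum_congr rfl fun l _ => ?_
          simp only [hbdef]
          rw [div_pow]
          rw [show (Rc j l - c * dd j l) ^ 2
            = Rc j l ^ 2 - 2 * c * (dd j l * Rc j l) + c ^ 2 * dd j l ^ 2 by ring, hdd2 j l]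
      _ = (∑ j, ∑ l, (Rc j l ^ 2 - 2 * c * (dd j l * Rc j l) + c ^ 2 * dd j l)) / ((n:ℝ)-2)^2 := by
          simp only [← Finset.sum_div]
      _ = ((∑ j, ∑ l, Rc j l ^ 2) - 2 * c * (∑ j, ∑ l, dd j l * Rc j l)
            + c ^ 2 * (∑ j, ∑ l, dd j l)) / ((n:ℝ)-2)^2 := by
          congr 1
          rw [split3]
          congr 1
          · congr 1
            rw [Finset.mul_sum]
            exact Finset.sum_congr rfl fun j _ => by rw [Finset.mul_sum]
          · rw [Finset.mul_sum]
            exact Finset.sum_congr rfl fun j _ => by rw [Finset.mul_sum]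
      _ = (B2 - 2 * c * s + c ^ 2 * (n : ℝ)) / ((n : ℝ) - 2) ^ 2 := by
          rw [hddRc, sum_dd_univ, hB2, nb2]
  have htrb : trb b = (s - c * (n : ℝ)) / ((n : ℝ) - 2) := by
    rw [trb]
    calc ∑ i, b i i = ∑ i : Fin n, (Rc i i - c) / ((n:ℝ)-2) := by
          refine Finset.sum_congr rfl fun i _ => ?_
          simp [hbdef, dd]
      _ = (s - c * (n : ℝ)) / ((n : ℝ) - 2) := by
          rw [← Finset.sum_div, Finset.sum_sub_distrib, Finset.sum_const, Finset.card_univ,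
            Fintype.card_fin, nsmul_eq_mul,
            show (∑ x : Fin n, Rc x x) = s from hs.symm]
          ring
  have hW : ∑ i, ∑ j, ∑ k, ∑ l, (r i j k l - KN b i j k l) ^ 2 = 0 := by
    rw [KEY r a1 ps b hb, hipc, hnb2, htrb, hc, ← hA]
    have hA0 : A = 4 * (B2 / ((n:ℝ)-2) - s ^ 2 / (2 * ((n:ℝ)-1) * ((n:ℝ)-2))) := by
      have := hQ
      field_simp at this ⊢
      linarith
    rw [hA0]
    field_simp
    ring
  refine ⟨b, hb, fun i j k l => ?_⟩
  have := sum4_sq_zero _ hW i j k l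
  linarith

end

lemma reverse_core (b : Fin n → Fin n → ℝ) (hb : ∀ i j, b i j = b j i) (hn : 4 ≤ n) :
    (∑ i, ∑ j, ∑ k, ∑ l, KN b i j k l ^ 2) / 4
      - nb2 (RicOf (KN b)) / ((n : ℝ) - 2)
      + trb (RicOf (KN b)) ^ 2 / (2 * ((n : ℝ) - 1) * ((n : ℝ) - 2)) = 0 := by
  have hn1 : ((n : ℝ) - 1) ≠ 0 := by
    have : (4 : ℝ) ≤ (n : ℝ) := by exact_mod_cast hn
    linarith
  have hn2 : ((n : ℝ) - 2) ≠ 0 := by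
    have : (4 : ℝ) ≤ (n : ℝ) := by exact_mod_cast hn
    linarith
  set τ := trb b with hτ
  set β := nb2 b with hβ
  have hdd2 : ∀ j l : Fin n, dd j l ^ 2 = dd j l := by
    intro j l; simp only [dd]; split <;> norm_num
  have hA : ∑ i, ∑ j, ∑ k, ∑ l, KN b i j k l ^ 2 = 4 * (((n : ℝ) - 2) * β + τ ^ 2) := by
    rw [← L2 b hb]
    exact Finset.sum_congr rfl fun i _ => Finset.sum_congr rfl fun j _ =>
      Finset.sum_congr rfl fun k _ => Finset.sum_congr rfl fun l _ => sq (KN b i j k l) ▸ by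
        rw [sq]
  have hnb2R : nb2 (RicOf (KN b))
      = ((n : ℝ) - 2) ^ 2 * β + 2 * ((n : ℝ) - 2) * τ ^ 2 + τ ^ 2 * (n : ℝ) := by
    rw [nb2]
    calc ∑ j, ∑ l, RicOf (KN b) j l ^ 2
        = ∑ j, ∑ l, (((n:ℝ)-2)^2 * b j l ^ 2 - (-(2 * (((n:ℝ)-2) * τ)) * (dd j l * b j l))
            + τ^2 * dd j l) := by
          refine Finset.sum_congr rfl fun j _ => Finset.sum_congr rfl fun l _ => ?_
          rw [RicKN b hb j l]
          rw [show (((n:ℝ)-2) * b j l + trb b * dd j l) ^ 2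
            = ((n:ℝ)-2)^2 * b j l ^ 2 + 2 * (((n:ℝ)-2) * trb b) * (dd j l * b j l)
              + trb b ^ 2 * dd j l ^ 2 by ring, hdd2 j l, ← hτ]
          ring
      _ = ((n:ℝ)-2)^2 * (∑ j, ∑ l, b j l ^ 2)
            - (-(2 * (((n:ℝ)-2) * τ)) * ∑ j, ∑ l, dd j l * b j l)
            + τ^2 * ∑ j, ∑ l, dd j l := by
          rw [split3]
          congr 1
          congr 1
          · rw [Finset.mul_sum]
            exact Finset.sum_congr rfl fun j _ => by rw [Finset.mul_sum]
          · rw [Finset.mul_sum]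
            exact Finset.sum_congr rfl fun j _ => by rw [Finset.mul_sum]
          · rw [Finset.mul_sum]
            exact Finset.sum_congr rfl fun j _ => by rw [Finset.mul_sum]
      _ = _ := by
          rw [sum_dd_b b hb, sum_dd_univ, ← hτ,
            show (∑ j : Fin n, ∑ l : Fin n, b j l ^ 2) = β from hβ.symm]
          ring
  have htrbR : trb (RicOf (KN b)) = (2 * (n : ℝ) - 2) * τ := by
    rw [trb]
    calc ∑ i, RicOf (KN b) i i
        = ∑ i : Fin n, (((n:ℝ)-2) * b i i + τ * dd i i) := by
          refine Finset.sum_congr rfl fun i _ => ?_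
          rw [RicKN b hb i i, ← hτ]
      _ = (2 * (n : ℝ) - 2) * τ := by
          rw [Finset.sum_add_distrib, ← Finset.mul_sum,
            show (∑ i : Fin n, b i i) = τ from hτ.symm]
          have : ∀ i : Fin n, τ * dd i i = τ := by intro i; simp [dd]
          rw [Finset.sum_congr rfl fun i _ => this i, Finset.sum_const, Finset.card_univ,
            Fintype.card_fin, nsmul_eq_mul]
          ring
  rw [hA, hnb2R, htrbR]
  field_simp
  ring
end Aux



namespace Aux

section Bridge
variable {n : ℕ} {V : Type*} [NormedAddCommGroup V] [InnerProductSpace ℝ V]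
  (e : OrthonormalBasis (Fin n) ℝ V)

lemma oif_singleton (i : Fin n) (h : ({i} : Finset (Fin n)).card = 1) (k : Fin 1) :
    ((({i} : Finset (Fin n)).orderIsoOfFin h k : {x // x ∈ ({i} : Finset (Fin n))}) : Fin n) = i := by
  have hm := (({i} : Finset (Fin n)).orderIsoOfFin h k).2
  simpa using hm

lemma oif_pair (i j : Fin n) (hij : i < j) (h : ({i, j} : Finset (Fin n)).card = 2) :
    ((({i, j} : Finset (Fin n)).orderIsoOfFin h 0 : {x // x ∈ ({i, j} : Finset (Fin n))}) : Fin n) = i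
    ∧ ((({i, j} : Finset (Fin n)).orderIsoOfFin h 1 : {x // x ∈ ({i, j} : Finset (Fin n))}) : Fin n) = j := by
  set f := ({i, j} : Finset (Fin n)).orderIsoOfFin h with hf
  have h0 : (f 0 : Fin n) ∈ ({i, j} : Finset (Fin n)) := (f 0).2
  have h1 : (f 1 : Fin n) ∈ ({i, j} : Finset (Fin n)) := (f 1).2
  have hlt : (f 0 : Fin n) < (f 1 : Fin n) := by
    have h01 : (0 : Fin 2) < 1 := by decide
    exact f.strictMono h01
  simp only [Finset.mem_insert, Finset.mem_singleton] at h0 h1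
  rcases h0 with h0 | h0 <;> rcases h1 with h1 | h1
  · rw [h0, h1] at hlt; exact absurd hlt (lt_irrefl i)
  · exact ⟨h0, h1⟩
  · rw [h0, h1] at hlt; exact absurd (hlt.trans hij) (lt_irrefl j)
  · rw [h0, h1] at hlt; exact absurd hlt (lt_irrefl j)

lemma card_pair' {i j : Fin n} (hij : i ≠ j) : ({i, j} : Finset (Fin n)).card = 2 := by
  rw [Finset.card_insert_of_notMem (by simpa using hij), Finset.card_singleton]

lemma pair_sdiff_left {i j : Fin n} (hij : i ≠ j) :
    ({i, j} : Finset (Fin n)) \ {i} = {j} := by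
  ext x
  simp only [Finset.mem_sdiff, Finset.mem_insert, Finset.mem_singleton]
  constructor
  · rintro ⟨h1 | h1, h2⟩
    · exact absurd h1 h2
    · exact h1
  · rintro rfl
    exact ⟨Or.inr rfl, fun h => hij h.symm⟩

lemma pair_sdiff_right {i j : Fin n} (hij : i ≠ j) :
    ({i, j} : Finset (Fin n)) \ {j} = {i} := by
  rw [Finset.pair_comm]
  exact pair_sdiff_left hij.symm

lemma sign_ss (i j : Fin n) :
    DF.shuffleSign ({i} : Finset (Fin n)) {j} = if j < i then -1 else 1 := by
  rw [DF.shuffleSign, Finset.sum_singleton, Finset.filter_singleton]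
  split <;> simp

lemma sign_se (i : Fin n) : DF.shuffleSign ({i} : Finset (Fin n)) ∅ = 1 := by
  simp [DF.shuffleSign]

variable (R : V → V → V → V → ℝ)

lemma ofCurv_eval (i j k l : Fin n) (hij : i < j) (hkl : k < l) :
    ofCurv e R {i, j} {k, l} = R (e i) (e j) (e k) (e l) := by
  have hS : ({i, j} : Finset (Fin n)).card = 2 := card_pair' hij.ne
  have hT : ({k, l} : Finset (Fin n)).card = 2 := card_pair' hkl.ne
  rw [ofCurv, ofForm, dif_pos (And.intro hS hT)]
  obtain ⟨h0, h1⟩ := oif_pair i j hij hS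
  obtain ⟨h2, h3⟩ := oif_pair k l hkl hT
  simp only []
  rw [h0, h1, h2, h3]

lemma ofCurv_zero (S T : Finset (Fin n)) (h : ¬(S.card = 2 ∧ T.card = 2)) :
    ofCurv e R S T = 0 := by
  rw [ofCurv, ofForm, dif_neg h]

variable (B : V → V → ℝ)

lemma ofBilin_eval (i j : Fin n) : ofBilin e B {i} {j} = B (e i) (e j) := by
  rw [ofBilin, ofForm, dif_pos (And.intro (Finset.card_singleton i) (Finset.card_singleton j))]
  simp only []
  rw [oif_singleton i _ 0, oif_singleton j _ 0]

lemma ofBilin_zero (S T : Finset (Fin n)) (h : ¬(S.card = 1 ∧ T.card = 1)) :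
    ofBilin e B S T = 0 := by
  rw [ofBilin, ofForm, dif_neg h]

end Bridge
end Aux

namespace Aux

section CurvBridge
variable {n : ℕ} {V : Type*} [NormedAddCommGroup V] [InnerProductSpace ℝ V]
  (e : OrthonormalBasis (Fin n) ℝ V) (R : V → V → V → V → ℝ) (hR : IsCurv R)

/-- components of `R` -/
noncomputable def rr : Fin n → Fin n → Fin n → Fin n → ℝ := fun i j k l => R (e i) (e j) (e k) (e l)

include hR in
lemma rr_a1 : ∀ i j k l, rr e R i j k l = - rr e R j i k l := fun i j k l =>
  hR.antisymm (e i) (e j) (e k) (e l)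

include hR in
lemma rr_ps : ∀ i j k l, rr e R i j k l = rr e R k l i j := fun i j k l =>
  hR.pair_symm (e i) (e j) (e k) (e l)

include hR in
lemma rr_a2' : ∀ i j k l, rr e R i j k l = - rr e R i j l k := fun i j k l =>
  a2 (rr e R) (rr_a1 e R hR) (rr_ps e R hR) i j k l

include hR in
lemma contr_ofCurv (j l : Fin n) :
    DF.contr (ofCurv e R) {j} {l} = RicOf (rr e R) j l := by
  rw [DF.contr, RicOf]
  refine Finset.sum_congr rfl fun i _ => ?_
  by_cases hij : i = j
  · subst hij
    rw [if_pos (Or.inl (Finset.mem_singleton_self i))]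
    have h0 := diag1 (rr e R) (rr_a1 e R hR) i i l
    rw [h0]
  · by_cases hil : i = l
    · subst hil
      rw [if_pos (Or.inr (Finset.mem_singleton_self i))]
      have h0 := rr_a2' e R hR i j i i
      have : rr e R i j i i = 0 := by linarith
      rw [this]
    · rw [if_neg (by simp [hij, hil])]
      show DF.shuffleSign {i} {j} * DF.shuffleSign {i} {l} * ofCurv e R {i, j} {i, l}
        = rr e R i j i l
      rcases lt_or_gt_of_ne hij with h1 | h1 <;> rcases lt_or_gt_of_ne hil with h2 | h2
      · rw [sign_ss, if_neg (asymm h1), sign_ss, if_neg (asymm h2),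
          ofCurv_eval e R i j i l h1 h2]
        show (1 : ℝ) * 1 * rr e R i j i l = rr e R i j i l
        ring
      · rw [sign_ss, if_neg (asymm h1), sign_ss, if_pos h2, Finset.pair_comm i l,
          ofCurv_eval e R i j l i h1 h2]
        have h3 : rr e R i j l i = - rr e R i j i l := by
          have := rr_a2' e R hR i j i l; linarith
        show (1 : ℝ) * (-1) * rr e R i j l i = rr e R i j i l
        rw [h3]; ring
      · rw [sign_ss, if_pos h1, sign_ss, if_neg (asymm h2), Finset.pair_comm i j,
          ofCurv_eval e R j i i l h1 h2]
        have h3 : rr e R j i i l = - rr e R i j i l := by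
          have := rr_a1 e R hR i j i l; linarith
        show (-1 : ℝ) * 1 * rr e R j i i l = rr e R i j i l
        rw [h3]; ring
      · rw [sign_ss, if_pos h1, sign_ss, if_pos h2, Finset.pair_comm i j, Finset.pair_comm i l,
          ofCurv_eval e R j i l i h1 h2]
        have h3 : rr e R j i l i = rr e R i j i l := by
          have a := rr_a1 e R hR i j l i
          have b := rr_a2' e R hR i j i l
          linarith
        show (-1 : ℝ) * (-1) * rr e R j i l i = rr e R i j i l
        rw [h3]; ring

lemma contr_ofCurv_zero (S T : Finset (Fin n)) (h : ¬(S.card = 1 ∧ T.card = 1)) :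
    DF.contr (ofCurv e R) S T = 0 := by
  rw [DF.contr]
  apply Finset.sum_eq_zero
  intro i _
  by_cases hm : i ∈ S ∨ i ∈ T
  · rw [if_pos hm]
  · rw [if_neg hm]
    push_neg at hm
    have hz : ofCurv e R (insert i S) (insert i T) = 0 := by
      apply ofCurv_zero
      rintro ⟨hS2, hT2⟩
      rw [Finset.card_insert_of_notMem hm.1] at hS2
      rw [Finset.card_insert_of_notMem hm.2] at hT2
      exact h ⟨by omega, by omega⟩
    rw [hz, mul_zero]

include hR in
lemma dinner_ofCurv :
    DF.dinner (ofCurv e R) (ofCurv e R)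
      = (∑ i, ∑ j, ∑ k, ∑ l, rr e R i j k l ^ 2) / 4 := by
  have ha1 := rr_a1 e R hR
  have hps := rr_ps e R hR
  have ha2 := rr_a2' e R hR
  rw [DF.dinner, sum2 _ (fun S hS => Finset.sum_eq_zero fun T _ => by
    rw [ofCurv_zero e R S T (fun hc => hS hc.1), zero_mul])]
  have step1 : ∀ i j : Fin n,
      (if i < j then (∑ T : Finset (Fin n), ofCurv e R {i,j} T * ofCurv e R {i,j} T) else 0)
      = (if i < j then (∑ k, ∑ l, rr e R i j k l * rr e R i j k l) else 0) / 2 := by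
    intro i j
    split
    · rename_i hij
      rw [sum2 _ (fun T hT => by rw [ofCurv_zero e R _ T (fun hc => hT hc.2), zero_mul])]
      rw [show (∑ k, ∑ l, if k < l then ofCurv e R {i,j} {k,l} * ofCurv e R {i,j} {k,l} else 0)
          = ∑ k, ∑ l, if k < l then rr e R i j k l * rr e R i j k l else 0 from
        Finset.sum_congr rfl fun k _ => Finset.sum_congr rfl fun l _ => by
          split
          · rename_i hkl; rw [ofCurv_eval e R i j k l hij hkl]; rfl
          · rfl]
      rw [half (fun k l => rr e R i j k l * rr e R i j k l)
          (fun k l => by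
            show rr e R i j k l * rr e R i j k l = rr e R i j l k * rr e R i j l k
            rw [show rr e R i j l k = - rr e R i j k l from by
              have := ha2 i j k l; linarith]; ring)
          (fun k => by
            show rr e R i j k k * rr e R i j k k = 0
            rw [diag2 _ ha1 hps i j k]; ring)]
    · norm_num
  rw [Finset.sum_congr rfl fun i _ => Finset.sum_congr rfl fun j _ => step1 i j]
  simp only [← Finset.sum_div]
  rw [half (fun i j => ∑ k, ∑ l, rr e R i j k l * rr e R i j k l)
      (fun i j => by
        show (∑ k, ∑ l, rr e R i j k l * rr e R i j k l)
          = ∑ k, ∑ l, rr e R j i k l * rr e R j i k l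
        exact Finset.sum_congr rfl fun k _ => Finset.sum_congr rfl fun l _ => by
          rw [show rr e R j i k l = - rr e R i j k l from by have := ha1 i j k l; linarith]; ring)
      (fun i => by
        show (∑ k, ∑ l, rr e R i i k l * rr e R i i k l) = 0
        exact Finset.sum_eq_zero fun k _ => Finset.sum_eq_zero fun l _ => by
          rw [diag1 _ ha1 i k l]; ring)]
  rw [show (∑ i, ∑ j, ∑ k, ∑ l, rr e R i j k l * rr e R i j k l)
      = ∑ i, ∑ j, ∑ k, ∑ l, rr e R i j k l ^ 2 from
    Finset.sum_congr rfl fun i _ => Finset.sum_congr rfl fun j _ =>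
      Finset.sum_congr rfl fun k _ => Finset.sum_congr rfl fun l _ => (sq (rr e R i j k l)).symm]
  ring

include hR in
lemma dinner_contr_ofCurv :
    DF.dinner (DF.contrN 1 (ofCurv e R)) (DF.contrN 1 (ofCurv e R))
      = nb2 (RicOf (rr e R)) := by
  rw [DF.contrN, Function.iterate_one, DF.dinner, nb2]
  rw [sum1 _ (fun S hS => Finset.sum_eq_zero fun T _ => by
    rw [contr_ofCurv_zero e R S T (fun hc => hS hc.1), zero_mul])]
  refine Finset.sum_congr rfl fun i _ => ?_
  rw [sum1 _ (fun T hT => by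
    rw [contr_ofCurv_zero e R _ T (fun hc => hT hc.2), zero_mul])]
  refine Finset.sum_congr rfl fun j _ => ?_
  rw [contr_ofCurv e R hR i j, sq]

include hR in
lemma toScalar_contr2 :
    DF.toScalar (DF.contrN 2 (ofCurv e R)) = trb (RicOf (rr e R)) := by
  rw [DF.contrN, DF.toScalar]
  rw [show DF.contr^[2] (ofCurv e R) = DF.contr (DF.contr (ofCurv e R)) from by
    rw [Function.iterate_succ_apply', Function.iterate_one]]
  rw [DF.contr, trb]
  refine Finset.sum_congr rfl fun i _ => ?_
  rw [if_neg (by simp)]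
  show DF.shuffleSign {i} ∅ * DF.shuffleSign {i} ∅
      * DF.contr (ofCurv e R) (insert i ∅) (insert i ∅) = RicOf (rr e R) i i
  rw [sign_se, LawfulSingleton.insert_empty_eq, contr_ofCurv e R hR i i]
  ring


end CurvBridge

section MulGm
variable {n : ℕ}

lemma mul_gm (β : DF n) (S T : Finset (Fin n)) :
    DF.mul (DF.gm n) β S T
      = ∑ a ∈ S ∩ T, DF.shuffleSign {a} (S \ {a}) * DF.shuffleSign {a} (T \ {a})
          * β (S \ {a}) (T \ {a}) := by
  rw [DF.mul]
  have inner : ∀ A ∈ S.powerset,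
      (∑ C ∈ T.powerset, DF.shuffleSign A (S \ A) * DF.shuffleSign C (T \ C)
        * DF.gm n A C * β (S \ A) (T \ C))
      = if A ⊆ T ∧ A.card = 1 then
          DF.shuffleSign A (S \ A) * DF.shuffleSign A (T \ A) * β (S \ A) (T \ A)
        else 0 := by
    intro A _
    have point : ∀ C ∈ T.powerset,
        DF.shuffleSign A (S \ A) * DF.shuffleSign C (T \ C) * DF.gm n A C * β (S \ A) (T \ C)
        = if C = A then (if A.card = 1 then
            DF.shuffleSign A (S \ A) * DF.shuffleSign A (T \ A) * β (S \ A) (T \ A) else 0)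
          else 0 := by
      intro C _
      by_cases hC : C = A
      · subst hC
        by_cases hc : C.card = 1
        · rw [if_pos rfl, if_pos hc, DF.gm, if_pos ⟨rfl, hc⟩]
          ring
        · rw [if_pos rfl, if_neg hc, DF.gm, if_neg (fun hh => hc hh.2), mul_zero, zero_mul]
      · rw [if_neg hC, DF.gm, if_neg (fun hh => hC hh.1.symm), mul_zero, zero_mul]
    rw [Finset.sum_congr rfl point, Finset.sum_ite_eq' T.powerset A _]
    simp only [Finset.mem_powerset]
    by_cases hAT : A ⊆ T
    · rw [if_pos hAT]
      by_cases hc : A.card = 1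
      · rw [if_pos hc, if_pos ⟨hAT, hc⟩]
      · rw [if_neg hc, if_neg (fun hh => hc hh.2)]
    · rw [if_neg hAT, if_neg (fun hh => hAT hh.1)]
  rw [Finset.sum_congr rfl inner]
  rw [← Finset.sum_filter]
  refine (Finset.sum_nbij (fun a : Fin n => ({a} : Finset (Fin n))) ?_ ?_ ?_ ?_).symm
  · intro a ha
    rw [Finset.mem_inter] at ha
    rw [Finset.mem_filter, Finset.mem_powerset]
    exact ⟨Finset.singleton_subset_iff.2 ha.1,
      Finset.singleton_subset_iff.2 ha.2, Finset.card_singleton a⟩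
  · intro a _ b _ h
    exact Finset.singleton_injective h
  · intro A hA
    rw [Finset.mem_coe, Finset.mem_filter, Finset.mem_powerset] at hA
    obtain ⟨a, rfl⟩ := Finset.card_eq_one.1 hA.2.2
    refine ⟨a, ?_, rfl⟩
    rw [Finset.mem_coe, Finset.mem_inter]
    exact ⟨Finset.singleton_subset_iff.1 hA.1, Finset.singleton_subset_iff.1 hA.2.1⟩
  · intro a _; rfl

lemma mul_gm_pair (β : DF n) (i j k l : Fin n) (hij : i < j) (hkl : k < l) :
    DF.mul (DF.gm n) β {i, j} {k, l}
      = (if i = k then β {j} {l} else 0) + (if j = l then β {i} {k} else 0)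
        - (if i = l then β {j} {k} else 0) - (if j = k then β {i} {l} else 0) := by
  rw [mul_gm]
  rw [← Finset.filter_mem_eq_inter, Finset.sum_filter]
  rw [Finset.sum_pair hij.ne]
  have hi : (if i ∈ ({k, l} : Finset (Fin n)) then
        DF.shuffleSign {i} (({i, j} : Finset (Fin n)) \ {i})
          * DF.shuffleSign {i} (({k, l} : Finset (Fin n)) \ {i})
          * β (({i, j} : Finset (Fin n)) \ {i}) (({k, l} : Finset (Fin n)) \ {i}) else 0)
      = (if i = k then β {j} {l} else 0) - (if i = l then β {j} {k} else 0) := by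
    by_cases h1 : i = k
    · subst h1
      rw [pair_sdiff_left hij.ne, pair_sdiff_left hkl.ne, sign_ss, sign_ss,
        if_neg (asymm hij), if_neg (asymm hkl)]
      rw [if_pos (show i ∈ ({i, l} : Finset (Fin n)) by simp), if_pos rfl, if_neg hkl.ne]
      ring
    · by_cases h2 : i = l
      · subst h2
        rw [pair_sdiff_left hij.ne, pair_sdiff_right hkl.ne, sign_ss, sign_ss,
          if_neg (asymm hij), if_pos hkl]
        rw [if_pos (show i ∈ ({k, i} : Finset (Fin n)) by simp), if_neg h1, if_pos rfl]
        ring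
      · rw [if_neg (by simp [h1, h2]), if_neg h1, if_neg h2]
        ring
  have hj : (if j ∈ ({k, l} : Finset (Fin n)) then
        DF.shuffleSign {j} (({i, j} : Finset (Fin n)) \ {j})
          * DF.shuffleSign {j} (({k, l} : Finset (Fin n)) \ {j})
          * β (({i, j} : Finset (Fin n)) \ {j}) (({k, l} : Finset (Fin n)) \ {j}) else 0)
      = (if j = l then β {i} {k} else 0) - (if j = k then β {i} {l} else 0) := by
    by_cases h1 : j = k
    · subst h1
      rw [pair_sdiff_right hij.ne, pair_sdiff_left hkl.ne, sign_ss, sign_ss,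
        if_pos hij, if_neg (asymm hkl)]
      rw [if_pos (show j ∈ ({j, l} : Finset (Fin n)) by simp), if_neg hkl.ne, if_pos rfl]
      ring
    · by_cases h2 : j = l
      · subst h2
        rw [pair_sdiff_right hij.ne, pair_sdiff_right hkl.ne, sign_ss, sign_ss,
          if_pos hij, if_pos hkl]
        rw [if_pos (show j ∈ ({k, j} : Finset (Fin n)) by simp), if_pos rfl, if_neg h1]
        ring
      · rw [if_neg (by simp [h1, h2]), if_neg h1, if_neg h2]
        ring
  rw [hi, hj]
  ring

lemma mul_gm_zero (β : DF n) (hβ : ∀ S T, ¬(S.card = 1 ∧ T.card = 1) → β S T = 0)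
    (S T : Finset (Fin n)) (h : ¬(S.card = 2 ∧ T.card = 2)) :
    DF.mul (DF.gm n) β S T = 0 := by
  rw [mul_gm]
  apply Finset.sum_eq_zero
  intro a ha
  rw [Finset.mem_inter] at ha
  have hS : (S \ {a}).card = S.card - 1 := by
    rw [show S \ {a} = S.erase a from (Finset.sdiff_singleton_eq_erase a S).symm ▸ rfl]
    exact Finset.card_erase_of_mem ha.1
  have hT : (T \ {a}).card = T.card - 1 := by
    rw [show T \ {a} = T.erase a from (Finset.sdiff_singleton_eq_erase a T).symm ▸ rfl]
    exact Finset.card_erase_of_mem ha.2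
  have hScard : 1 ≤ S.card := Finset.card_pos.2 ⟨a, ha.1⟩
  have hTcard : 1 ≤ T.card := Finset.card_pos.2 ⟨a, ha.2⟩
  rw [hβ _ _ (by rw [hS, hT]; rintro ⟨u, v⟩; exact h ⟨by omega, by omega⟩), mul_zero]

end MulGm

lemma KN_a2 {n : ℕ} (b : Fin n → Fin n → ℝ) : ∀ i j k l, KN b i j k l = - KN b i j l k := by
  intro i j k l; simp only [KN]; ring

lemma extend {n : ℕ} (r F : Fin n → Fin n → Fin n → Fin n → ℝ)
    (a1 : ∀ i j k l, r i j k l = - r j i k l)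
    (ps : ∀ i j k l, r i j k l = r k l i j)
    (Fa1 : ∀ i j k l, F i j k l = - F j i k l)
    (Fa2 : ∀ i j k l, F i j k l = - F i j l k)
    (hbase : ∀ i j k l, i < j → k < l → r i j k l = F i j k l) :
    ∀ i j k l, r i j k l = F i j k l := by
  have ra2 := a2 r a1 ps
  have step1 : ∀ i j k l, i < j → r i j k l = F i j k l := by
    intro i j k l hij
    rcases lt_trichotomy k l with h | h | h
    · exact hbase i j k l hij h
    · subst h
      have h1 := ra2 i j k k
      have h2 := Fa2 i j k k
      linarith
    · have h1 := ra2 i j k l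
      have h2 := Fa2 i j k l
      have h3 := hbase i j l k hij h
      linarith
  intro i j k l
  rcases lt_trichotomy i j with h | h | h
  · exact step1 i j k l h
  · subst h
    have h1 := a1 i i k l
    have h2 := Fa1 i i k l
    linarith
  · have h1 := a1 i j k l
    have h2 := Fa1 i j k l
    have h3 := step1 j i k l h
    linarith

lemma pair_rep {n : ℕ} {S : Finset (Fin n)} (h : S.card = 2) :
    ∃ i j : Fin n, i < j ∧ S = {i, j} := by
  obtain ⟨a, b, hab, rfl⟩ := Finset.card_eq_two.1 h
  rcases lt_or_gt_of_ne hab with hl | hl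
  · exact ⟨a, b, hl, rfl⟩
  · exact ⟨b, a, hl, Finset.pair_comm a b⟩

section Bilin
variable {n : ℕ} {V : Type*} [NormedAddCommGroup V] [InnerProductSpace ℝ V]
  (e : OrthonormalBasis (Fin n) ℝ V)

noncomputable def bilinOf (b : Fin n → Fin n → ℝ) : V → V → ℝ :=
  fun x y => ∑ p, ∑ q, b p q * (inner ℝ x (e p) : ℝ) * (inner ℝ y (e q) : ℝ)

lemma bilinOf_isBilin (b : Fin n → Fin n → ℝ) : IsBilin (bilinOf e b) := by
  constructor
  · intro c x x' y
    simp only [bilinOf]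
    rw [Finset.mul_sum, ← Finset.sum_add_distrib]
    refine Finset.sum_congr rfl fun p _ => ?_
    rw [Finset.mul_sum, ← Finset.sum_add_distrib]
    refine Finset.sum_congr rfl fun q _ => ?_
    rw [inner_add_left, real_inner_smul_left]
    ring
  · intro c x y y'
    simp only [bilinOf]
    rw [Finset.mul_sum, ← Finset.sum_add_distrib]
    refine Finset.sum_congr rfl fun p _ => ?_
    rw [Finset.mul_sum, ← Finset.sum_add_distrib]
    refine Finset.sum_congr rfl fun q _ => ?_
    rw [inner_add_left, real_inner_smul_left]
    ring

lemma bilinOf_symm (b : Fin n → Fin n → ℝ) (hb : ∀ i j, b i j = b j i) :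
    IsSymmBilin (bilinOf e b) := by
  intro x y
  simp only [bilinOf]
  rw [Finset.sum_comm]
  refine Finset.sum_congr rfl fun p _ => Finset.sum_congr rfl fun q _ => ?_
  rw [hb q p]
  ring

lemma bilinOf_eval (b : Fin n → Fin n → ℝ) (i j : Fin n) : bilinOf e b (e i) (e j) = b i j := by
  have horth : ∀ a p : Fin n, (inner ℝ (e a) (e p) : ℝ) = dd a p := by
    intro a p
    rw [orthonormal_iff_ite.1 e.orthonormal a p]
    rfl
  simp only [bilinOf, horth]
  calc ∑ p, ∑ q, b p q * dd i p * dd j q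
      = ∑ p, dd i p * ∑ q, dd j q * b p q := by
        refine Finset.sum_congr rfl fun p _ => ?_
        rw [Finset.mul_sum]
        refine Finset.sum_congr rfl fun q _ => by ring
    _ = ∑ q, dd j q * b i q := sum_dd_left i _
    _ = b i j := sum_dd_left j _

end Bilin

end Aux

/-- **conformal flatness characterization.** For an algebraic curvature
tensor `R` on an `n`-dimensional real inner product space with `n ≥ 4`,
`|R|² − |cR|²/(n−2) + (c²R)²/(2(n−1)(n−2)) = 0` iff the Weyl part of `R` vanishes,
i.e. `R = gB` for some symmetric bilinear form `B`. -/
theorem stmt9_conformally_flat_characterization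
    (n : ℕ) (hn : 4 ≤ n)
    (V : Type*) [NormedAddCommGroup V] [InnerProductSpace ℝ V]
    (hV : Module.finrank ℝ V = n)
    (e : OrthonormalBasis (Fin n) ℝ V)
    (R : V → V → V → V → ℝ) (hR : IsCurv R) :
    DF.dinner (ofCurv e R) (ofCurv e R)
        - DF.dinner (DF.contrN 1 (ofCurv e R)) (DF.contrN 1 (ofCurv e R)) / ((n : ℝ) - 2)
        + (DF.toScalar (DF.contrN 2 (ofCurv e R))) ^ 2 / (2 * ((n : ℝ) - 1) * ((n : ℝ) - 2))
      = 0 ↔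
      ∃ B : V → V → ℝ, IsBilin B ∧ IsSymmBilin B ∧
        ofCurv e R = DF.mul (DF.gm n) (ofBilin e B) := by
  have ha1 := Aux.rr_a1 e R hR
  have hps := Aux.rr_ps e R hR
  rw [Aux.dinner_ofCurv e R hR, Aux.dinner_contr_ofCurv e R hR, Aux.toScalar_contr2 e R hR]
  constructor
  · intro hQ
    obtain ⟨b, hbsymm, hKN⟩ := Aux.forward_core (Aux.rr e R) ha1 hps hn hQ
    refine ⟨Aux.bilinOf e b, Aux.bilinOf_isBilin e b, Aux.bilinOf_symm e b hbsymm, ?_⟩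
    funext S T
    by_cases h2 : S.card = 2 ∧ T.card = 2
    · obtain ⟨i, j, hij, rfl⟩ := Aux.pair_rep h2.1
      obtain ⟨k, l, hkl, rfl⟩ := Aux.pair_rep h2.2
      rw [Aux.ofCurv_eval e R i j k l hij hkl, Aux.mul_gm_pair _ i j k l hij hkl,
        Aux.ofBilin_eval e _ j l, Aux.ofBilin_eval e _ i k,
        Aux.ofBilin_eval e _ j k, Aux.ofBilin_eval e _ i l,
        Aux.bilinOf_eval e b j l, Aux.bilinOf_eval e b i k,
        Aux.bilinOf_eval e b j k, Aux.bilinOf_eval e b i l]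
      rw [show R (e i) (e j) (e k) (e l) = Aux.KN b i j k l from hKN i j k l]
      simp only [Aux.KN, Aux.dd, ite_mul, one_mul, zero_mul]
    · rw [Aux.ofCurv_zero e R S T h2,
        Aux.mul_gm_zero _ (fun S' T' h' => Aux.ofBilin_zero e _ S' T' h') S T h2]
  · rintro ⟨B, hBbil, hBsymm, hEq⟩
    have hb0symm : ∀ i j : Fin n, B (e i) (e j) = B (e j) (e i) :=
      fun i j => hBsymm (e i) (e j)
    set b0 : Fin n → Fin n → ℝ := fun i j => B (e i) (e j) with hb0
    have hbase : ∀ i j k l : Fin n, i < j → k < l →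
        Aux.rr e R i j k l = Aux.KN b0 i j k l := by
      intro i j k l hij hkl
      have h := congrFun (congrFun hEq {i, j}) {k, l}
      rw [Aux.ofCurv_eval e R i j k l hij hkl, Aux.mul_gm_pair _ i j k l hij hkl,
        Aux.ofBilin_eval e _ j l, Aux.ofBilin_eval e _ i k,
        Aux.ofBilin_eval e _ j k, Aux.ofBilin_eval e _ i l] at h
      simp only [Aux.KN, Aux.dd, ite_mul, one_mul, zero_mul]
      exact h
    have hKN := Aux.extend (Aux.rr e R) (Aux.KN b0) ha1 hps
      (Aux.KN_a1 b0) (Aux.KN_a2 b0) hbase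
    have e4 : (∑ i, ∑ j, ∑ k, ∑ l, Aux.rr e R i j k l ^ 2)
        = ∑ i, ∑ j, ∑ k, ∑ l, Aux.KN b0 i j k l ^ 2 :=
      Finset.sum_congr rfl fun i _ => Finset.sum_congr rfl fun j _ =>
        Finset.sum_congr rfl fun k _ => Finset.sum_congr rfl fun l _ => by rw [hKN i j k l]
    have eR : Aux.RicOf (Aux.rr e R) = Aux.RicOf (Aux.KN b0) := by
      funext j l
      simp only [Aux.RicOf]
      exact Finset.sum_congr rfl fun i _ => hKN i j i l
    rw [e4, eR]
    exact Aux.reverse_core b0 (fun i j => hb0symm i j) hn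
end

section
/- Let (V,g) be an n-dimensional real inner product space, S a symmetric bilinear form on V, a ∈ V a vector with dual covector α = g(a,·), and set H = S − α⊗α + (1/2)|a|²·g (the algebraic form of the conformal Hessian term). Then the full contraction of the exterior square of H satisfies c²(H²) = 4·σ₂(S) + ((n−1)(n−4)/2)·|a|⁴ + 2(n−3)·(cS)·|a|² + 4·S(a,a). -/
/-!
Double forms on an `n`-dimensional real inner product space `(V, g)`, represented
by their components with respect to a (fixed) orthonormal basis: a `(p,q)`-double
form is determined by its values on pairs of increasingly ordered tuples of
distinct basis vectors, i.e. by a function `Finset (Fin n) → Finset (Fin n) → ℝ`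
(supported on pairs of sets of cardinalities `p` and `q`).
-/

open Finset

open scoped RealInnerProductSpace
section Aux

open Finset

namespace DF

variable {n : ℕ}

@[simp] lemma shuffleSign_empty_left (B : Finset (Fin n)) : shuffleSign (∅ : Finset (Fin n)) B = 1 := by
  simp [shuffleSign]

@[simp] lemma shuffleSign_empty_right (A : Finset (Fin n)) : shuffleSign A (∅ : Finset (Fin n)) = 1 := by
  simp [shuffleSign]

lemma shuffleSign_singleton (x y : Fin n) :
    shuffleSign {x} ({y} : Finset (Fin n)) = if y < x then -1 else 1 := by
  unfold shuffleSign
  rw [Finset.sum_singleton, Finset.filter_singleton]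
  split <;> simp

lemma shuffleSign_sq (A B : Finset (Fin n)) : shuffleSign A B * shuffleSign A B = 1 := by
  unfold shuffleSign
  rw [← pow_add]
  exact Even.neg_one_pow ⟨_, rfl⟩

lemma shuffleSign_singleton_mul (i j : Fin n) (h : i ≠ j) :
    shuffleSign {i} ({j} : Finset (Fin n)) * shuffleSign {j} ({i} : Finset (Fin n)) = -1 := by
  rcases lt_or_gt_of_ne h with h' | h' <;>
    simp [shuffleSign_singleton, h', not_lt_of_gt h']

lemma mul_one_left (ω : DF n) : mul (one n) ω = ω := by
  funext S T
  unfold mul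
  rw [Finset.sum_eq_single ∅]
  · rw [Finset.sum_eq_single ∅]
    · simp [one]
    · intro C _ hC
      simp [one, hC]
    · intro h; exact absurd (Finset.empty_mem_powerset T) h
  · intro A _ hA
    apply Finset.sum_eq_zero
    intro C _
    simp [one, hA]
  · intro h; exact absurd (Finset.empty_mem_powerset S) h

lemma pow_two_eq (ω : DF n) : pow ω 2 = mul ω ω := by
  show mul (pow ω 1) ω = _
  show mul (mul (pow ω 0) ω) ω = _
  show mul (mul (one n) ω) ω = _
  rw [mul_one_left]

end DF

lemma sum_powerset_one {α : Type*} [DecidableEq α] (S : Finset α) (f : Finset α → ℝ)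
    (hf : ∀ A, A.card ≠ 1 → f A = 0) : ∑ A ∈ S.powerset, f A = ∑ x ∈ S, f {x} := by
  have hsub : S.powersetCard 1 ⊆ S.powerset := by
    intro A hA
    simp only [Finset.mem_powersetCard] at hA
    exact Finset.mem_powerset.2 hA.1
  rw [← Finset.sum_subset hsub (by
    intro A hA hA'
    apply hf
    intro hcard
    exact hA' (Finset.mem_powersetCard.2 ⟨Finset.mem_powerset.1 hA, hcard⟩))]
  rw [Finset.powersetCard_one, Finset.sum_map]
  rfl

end Aux
section Aux2
open Finset
variable {n : ℕ} {V : Type*} [NormedAddCommGroup V] [InnerProductSpace ℝ V]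

lemma ofBilin_eq_zero (e : OrthonormalBasis (Fin n) ℝ V) (b : V → V → ℝ)
    (A C : Finset (Fin n)) (h : ¬(A.card = 1 ∧ C.card = 1)) : ofBilin e b A C = 0 := by
  unfold ofBilin ofForm
  rw [dif_neg h]

lemma ofBilin_singleton (e : OrthonormalBasis (Fin n) ℝ V) (b : V → V → ℝ) (i j : Fin n) :
    ofBilin e b {i} {j} = b (e i) (e j) := by
  unfold ofBilin ofForm
  rw [dif_pos ⟨Finset.card_singleton i, Finset.card_singleton j⟩]
  have hi := (({i} : Finset (Fin n)).orderIsoOfFin (Finset.card_singleton i) 0).2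
  have hj := (({j} : Finset (Fin n)).orderIsoOfFin (Finset.card_singleton j) 0).2
  rw [Finset.mem_singleton] at hi hj
  beta_reduce
  rw [hi, hj]

lemma pair_sdiff_left {i j : Fin n} (h : j ≠ i) : (insert j {i} : Finset (Fin n)) \ {j} = {i} := by
  ext x
  simp only [Finset.mem_sdiff, Finset.mem_insert, Finset.mem_singleton]
  constructor
  · rintro ⟨h1 | h1, h2⟩ <;> tauto
  · rintro rfl; exact ⟨Or.inr rfl, fun hx => h hx.symm⟩

lemma pair_sdiff_right {i j : Fin n} (h : j ≠ i) : (insert j {i} : Finset (Fin n)) \ {i} = {j} := by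
  ext x
  simp only [Finset.mem_sdiff, Finset.mem_insert, Finset.mem_singleton]
  constructor
  · rintro ⟨h1 | h1, h2⟩ <;> tauto
  · rintro rfl; exact ⟨Or.inl rfl, h⟩

/-- mul of two (1,1)-forms on a pair set. -/
lemma mul_pair (e : OrthonormalBasis (Fin n) ℝ V) (b : V → V → ℝ) {i j : Fin n} (h : j ≠ i) :
    DF.mul (ofBilin e b) (ofBilin e b) (insert j {i}) (insert j {i}) =
      2 * (b (e j) (e j) * b (e i) (e i) - b (e j) (e i) * b (e i) (e j)) := by
  have hji : j ∉ ({i} : Finset (Fin n)) := by simpa using h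
  unfold DF.mul
  rw [sum_powerset_one _ _ (by
    intro A hA
    apply Finset.sum_eq_zero
    intro C _
    rw [ofBilin_eq_zero e b A C (by tauto)]
    ring)]
  rw [Finset.sum_congr rfl (fun x _ => sum_powerset_one _ _ (fun C hC => by
    rw [ofBilin_eq_zero e b {x} C (by tauto)]; ring))]
  rw [Finset.sum_insert hji, Finset.sum_singleton, Finset.sum_insert hji, Finset.sum_singleton,
    Finset.sum_insert hji, Finset.sum_singleton, pair_sdiff_left h, pair_sdiff_right h]
  simp only [ofBilin_singleton]
  have hu := DF.shuffleSign_sq ({j} : Finset (Fin n)) {i}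
  have hv := DF.shuffleSign_sq ({i} : Finset (Fin n)) {j}
  have huv := DF.shuffleSign_singleton_mul j i h
  have hvu := DF.shuffleSign_singleton_mul i j (Ne.symm h)
  set u := DF.shuffleSign ({j} : Finset (Fin n)) {i}
  set v := DF.shuffleSign ({i} : Finset (Fin n)) {j}
  linear_combination (b (e j) (e j) * b (e i) (e i)) * hu + (b (e i) (e i) * b (e j) (e j)) * hv +
    (b (e j) (e i) * b (e i) (e j)) * huv + (b (e i) (e j) * b (e j) (e i)) * hvu

end Aux2
section Aux3
open Finset
variable {n : ℕ} {V : Type*} [NormedAddCommGroup V] [InnerProductSpace ℝ V]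

lemma contr2_pow2 (e : OrthonormalBasis (Fin n) ℝ V) (b : V → V → ℝ) :
    DF.toScalar (DF.contrN 2 (DF.pow (ofBilin e b) 2)) =
      2 * ((∑ i, b (e i) (e i)) ^ 2 - ∑ i, ∑ j, b (e i) (e j) * b (e j) (e i)) := by
  have hstep : DF.toScalar (DF.contrN 2 (DF.pow (ofBilin e b) 2)) =
      DF.contr (DF.contr (DF.pow (ofBilin e b) 2)) ∅ ∅ := rfl
  rw [hstep]
  unfold DF.contr
  simp only [Finset.notMem_empty, or_self, if_false, DF.shuffleSign_empty_right, one_mul,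
    Finset.insert_empty]
  have key : ∀ i j : Fin n,
      (if j ∈ ({i} : Finset (Fin n)) then (0:ℝ)
        else DF.shuffleSign {j} {i} * DF.shuffleSign {j} {i} *
          DF.pow (ofBilin e b) 2 (insert j {i}) (insert j {i})) =
      2 * (b (e i) (e i) * b (e j) (e j) - b (e i) (e j) * b (e j) (e i)) := by
    intro i j
    by_cases hji : j = i
    · subst hji
      rw [if_pos (by simp)]
      ring
    · rw [if_neg (by simpa using hji), DF.pow_two_eq, mul_pair e b hji,
        DF.shuffleSign_sq, one_mul]
      ring
  rw [Finset.sum_congr rfl fun i (_ : i ∈ Finset.univ) => Finset.sum_congr rfl fun j (_ : j ∈ Finset.univ) => key i j]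
  rw [sq, Finset.sum_mul_sum]
  rw [mul_sub, Finset.mul_sum, Finset.mul_sum, ← Finset.sum_sub_distrib]
  refine Finset.sum_congr rfl fun i _ => ?_
  rw [Finset.mul_sum, Finset.mul_sum, ← Finset.sum_sub_distrib]
  refine Finset.sum_congr rfl fun j _ => ?_
  ring

lemma contr1_eq (e : OrthonormalBasis (Fin n) ℝ V) (b : V → V → ℝ) :
    DF.toScalar (DF.contrN 1 (ofBilin e b)) = ∑ i, b (e i) (e i) := by
  have hstep : DF.toScalar (DF.contrN 1 (ofBilin e b)) = DF.contr (ofBilin e b) ∅ ∅ := rfl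
  rw [hstep]
  unfold DF.contr
  simp only [Finset.notMem_empty, or_self, if_false, DF.shuffleSign_empty_right, one_mul,
    Finset.insert_empty, ofBilin_singleton]

end Aux3
section Aux4
open Finset

lemma esymm_two {α : Type*} [DecidableEq α] (u : Finset α) (f : α → ℝ) :
    ∑ s ∈ u.powersetCard 2, ∏ i ∈ s, f i = ((∑ i ∈ u, f i) ^ 2 - ∑ i ∈ u, f i ^ 2) / 2 := by
  induction u using Finset.induction_on with
  | empty =>
    rw [show (∅ : Finset α).powersetCard 2 = ∅ from Finset.powersetCard_eq_empty.2 (by simp)]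
    simp
  | @insert a u ha ih =>
    rw [show (2 : ℕ) = 1 + 1 from rfl] at ih ⊢
    rw [Finset.powersetCard_succ_insert ha]
    have hdisj : Disjoint (u.powersetCard (1 + 1)) ((u.powersetCard 1).image (insert a)) := by
      rw [Finset.disjoint_left]
      intro t ht ht'
      have h1 : a ∉ t := fun hat =>
        ha ((Finset.mem_powersetCard.1 ht).1 hat)
      obtain ⟨t', _, rfl⟩ := Finset.mem_image.1 ht'
      exact h1 (Finset.mem_insert_self a t')
    rw [Finset.sum_union hdisj]
    rw [Finset.sum_image (fun x hx y hy hxy => by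
      have hax : a ∉ x := fun h => ha ((Finset.mem_powersetCard.1 hx).1 h)
      have hay : a ∉ y := fun h => ha ((Finset.mem_powersetCard.1 hy).1 h)
      rw [← Finset.erase_insert hax, ← Finset.erase_insert hay, hxy])]
    have hprod : ∀ t ∈ u.powersetCard 1, ∏ i ∈ insert a t, f i = f a * ∏ i ∈ t, f i := by
      intro t ht
      exact Finset.prod_insert (fun h => ha ((Finset.mem_powersetCard.1 ht).1 h))
    rw [Finset.sum_congr rfl hprod, ih]
    rw [Finset.powersetCard_one, Finset.sum_map]
    simp only [Function.Embedding.coeFn_mk, Finset.prod_singleton]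
    rw [← Finset.mul_sum, Finset.sum_insert ha, Finset.sum_insert ha]
    ring

lemma trace_eigs {n : ℕ} (M : Matrix (Fin n) (Fin n) ℝ) (hM : M.IsHermitian) :
    ∑ i, hM.eigenvalues i = ∑ i, M i i := by
  have h1 : Matrix.trace M = Matrix.trace (Matrix.diagonal (RCLike.ofReal ∘ hM.eigenvalues)) := by
    conv_lhs => rw [hM.spectral_theorem, Unitary.conjStarAlgAut_apply]
    rw [Matrix.trace_mul_cycle, Unitary.coe_star_mul_self, one_mul]
  rw [Matrix.trace_diagonal] at h1
  simp only [Function.comp_apply, RCLike.ofReal_real_eq_id, id] at h1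
  exact h1.symm.trans rfl

lemma trace_sq_eigs {n : ℕ} (M : Matrix (Fin n) (Fin n) ℝ) (hM : M.IsHermitian) :
    ∑ i, hM.eigenvalues i ^ 2 = ∑ i, ∑ j, M i j * M j i := by
  set U : Matrix (Fin n) (Fin n) ℝ := (hM.eigenvectorUnitary : Matrix (Fin n) (Fin n) ℝ) with hU
  set D : Matrix (Fin n) (Fin n) ℝ := Matrix.diagonal (RCLike.ofReal ∘ hM.eigenvalues) with hD
  have hMM : M * M = U * (D * D) * star U := by
    conv_lhs => rw [hM.spectral_theorem, Unitary.conjStarAlgAut_apply]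
    rw [show (U * D * star U) * (U * D * star U) = U * D * (star U * U) * D * star U by
      simp only [Matrix.mul_assoc]]
    rw [Unitary.coe_star_mul_self, Matrix.mul_one]
    simp only [Matrix.mul_assoc]
  have h1 : Matrix.trace (M * M) = Matrix.trace (D * D) := by
    rw [hMM, Matrix.trace_mul_cycle, Unitary.coe_star_mul_self, one_mul]
  have h2 : Matrix.trace (D * D) = ∑ i, hM.eigenvalues i ^ 2 := by
    rw [hD, Matrix.diagonal_mul_diagonal, Matrix.trace_diagonal]
    simp only [Function.comp_apply, RCLike.ofReal_real_eq_id, id]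
    exact Finset.sum_congr rfl fun i _ => (sq _).symm
  have h3 : Matrix.trace (M * M) = ∑ i, ∑ j, M i j * M j i := by
    simp [Matrix.trace, Matrix.mul_apply, Matrix.diag]
  rw [← h3, h1, h2]

end Aux4
section Aux5
open Finset
variable {n : ℕ} {V : Type*} [NormedAddCommGroup V] [InnerProductSpace ℝ V]

lemma sigma_two (e : OrthonormalBasis (Fin n) ℝ V) (S : V → V → ℝ) (hsymm : IsSymmBilin S) :
    DF.sigma 2 (ofBilin e S) =
      ((∑ i, S (e i) (e i)) ^ 2 - ∑ i, ∑ j, S (e i) (e j) * S (e j) (e i)) / 2 := by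
  have hHerm : (Matrix.of fun i j => ofBilin e S {i} {j} : Matrix (Fin n) (Fin n) ℝ).IsHermitian := by
    show Matrix.conjTranspose _ = _
    ext i j
    simp only [Matrix.conjTranspose_apply, Matrix.of_apply, star_trivial, ofBilin_singleton]
    exact hsymm (e j) (e i)
  unfold DF.sigma
  rw [dif_pos hHerm, esymm_two, trace_eigs _ hHerm, trace_sq_eigs _ hHerm]
  simp only [Matrix.of_apply, ofBilin_singleton]

lemma bilin_expand (S : V → V → ℝ) (hbil : IsBilin S) (e : OrthonormalBasis (Fin n) ℝ V) (a : V) :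
    S a a = ∑ i, ∑ j, ⟪a, e i⟫ * ⟪a, e j⟫ * S (e i) (e j) := by
  have hzero1 : ∀ y, S 0 y = 0 := by
    intro y
    have h := hbil.1 1 0 0 y
    simp only [one_smul, add_zero, one_mul] at h
    linarith
  have hzero2 : ∀ x, S x 0 = 0 := by
    intro x
    have h := hbil.2 1 x 0 0
    simp only [one_smul, add_zero, one_mul] at h
    linarith
  have hadd1 : ∀ x x' y, S (x + x') y = S x y + S x' y := by
    intro x x' y
    have h := hbil.1 1 x x' y
    simpa using h
  have hsmul1 : ∀ (c : ℝ) x y, S (c • x) y = c * S x y := by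
    intro c x y
    have h := hbil.1 c x 0 y
    simpa [hzero1] using h
  have hadd2 : ∀ x y y', S x (y + y') = S x y + S x y' := by
    intro x y y'
    have h := hbil.2 1 x y y'
    simpa using h
  have hsmul2 : ∀ (c : ℝ) x y, S x (c • y) = c * S x y := by
    intro c x y
    have h := hbil.2 c x y 0
    simpa [hzero2] using h
  let B : V →ₗ[ℝ] V →ₗ[ℝ] ℝ := LinearMap.mk₂ ℝ S hadd1 hsmul1 hadd2 hsmul2
  have hBS : ∀ x y, B x y = S x y := fun x y => rfl
  have hrepr : ∑ i, ⟪e i, a⟫ • e i = a := e.sum_repr' a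
  calc S a a = B a a := rfl
    _ = B (∑ i, ⟪e i, a⟫ • e i) (∑ j, ⟪e j, a⟫ • e j) := by rw [hrepr]
    _ = ∑ i, ∑ j, ⟪a, e i⟫ * ⟪a, e j⟫ * S (e i) (e j) := by
        simp only [map_sum, LinearMap.sum_apply, map_smul, LinearMap.smul_apply,
          smul_eq_mul, hBS, Finset.mul_sum]
        rw [Finset.sum_comm]
        refine Finset.sum_congr rfl fun i _ => Finset.sum_congr rfl fun j _ => ?_
        rw [real_inner_comm a (e i), real_inner_comm a (e j)]
        ring

end Aux5

/-- Let `S` be a symmetric bilinear form, `a ∈ V`, `α = g(a,·)`, and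
`H = S − α⊗α + (1/2)|a|²·g`. Then
`c²(H²) = 4σ₂(S) + ((n−1)(n−4)/2)|a|⁴ + 2(n−3)(cS)|a|² + 4·S(a,a)`. -/
theorem stmt16_conformal_hessian_term
    (n : ℕ)
    (V : Type*) [NormedAddCommGroup V] [InnerProductSpace ℝ V]
    (hV : Module.finrank ℝ V = n)
    (e : OrthonormalBasis (Fin n) ℝ V)
    (S : V → V → ℝ) (hbil : IsBilin S) (hsymm : IsSymmBilin S) (a : V) :
    DF.toScalar (DF.contrN 2 (DF.pow
        (ofBilin e (fun x y => S x y - ⟪a, x⟫ * ⟪a, y⟫ + (1 / 2) * ‖a‖ ^ 2 * ⟪x, y⟫)) 2)) =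
      4 * DF.sigma 2 (ofBilin e S)
      + (((n : ℝ) - 1) * ((n : ℝ) - 4) / 2) * ‖a‖ ^ 4
      + 2 * ((n : ℝ) - 3) * DF.toScalar (DF.contrN 1 (ofBilin e S)) * ‖a‖ ^ 2
      + 4 * S a a := by
  have hdelta : ∀ i j : Fin n, ⟪e i, e j⟫ = if i = j then (1:ℝ) else 0 :=
    fun i j => orthonormal_iff_ite.1 e.orthonormal i j
  have hN : ∑ i, ⟪a, e i⟫ * ⟪a, e i⟫ = ‖a‖ ^ 2 := by
    have h := e.sum_inner_mul_inner a a
    rw [real_inner_self_eq_norm_sq] at h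
    rw [← h]
    refine Finset.sum_congr rfl fun i _ => ?_
    rw [real_inner_comm a (e i)]
  rw [contr2_pow2, contr1_eq, sigma_two e S hsymm]
  have E1 : ∑ i, (S (e i) (e i) - ⟪a, e i⟫ * ⟪a, e i⟫ + 1 / 2 * ‖a‖ ^ 2 * ⟪e i, e i⟫)
      = (∑ i, S (e i) (e i)) - ‖a‖ ^ 2 + (n : ℝ) * (‖a‖ ^ 2 / 2) := by
    simp only [hdelta, if_pos, eq_self_iff_true, if_true, mul_one]
    rw [Finset.sum_add_distrib, Finset.sum_sub_distrib, hN, Finset.sum_const,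
      Finset.card_univ, Fintype.card_fin, nsmul_eq_mul]
    ring
  have hpoint : ∀ i j : Fin n,
      (S (e i) (e j) - ⟪a, e i⟫ * ⟪a, e j⟫ + 1 / 2 * ‖a‖ ^ 2 * ⟪e i, e j⟫) *
        (S (e j) (e i) - ⟪a, e j⟫ * ⟪a, e i⟫ + 1 / 2 * ‖a‖ ^ 2 * ⟪e j, e i⟫) =
      (S (e i) (e j) - ⟪a, e i⟫ * ⟪a, e j⟫) * (S (e j) (e i) - ⟪a, e j⟫ * ⟪a, e i⟫) +
        (if i = j then ‖a‖ ^ 2 * (S (e i) (e i) - ⟪a, e i⟫ * ⟪a, e i⟫) + (1 / 2 * ‖a‖ ^ 2) ^ 2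
          else 0) := by
    intro i j
    by_cases hij : i = j
    · subst hij
      rw [hdelta, if_pos rfl, if_pos rfl]
      ring
    · rw [hdelta, hdelta, if_neg hij, if_neg (Ne.symm hij), if_neg hij]
      ring
  have hFexp : ∀ i j : Fin n,
      (S (e i) (e j) - ⟪a, e i⟫ * ⟪a, e j⟫) * (S (e j) (e i) - ⟪a, e j⟫ * ⟪a, e i⟫) =
      S (e i) (e j) * S (e j) (e i) - 2 * (⟪a, e i⟫ * ⟪a, e j⟫ * S (e i) (e j)) +
        (⟪a, e i⟫ * ⟪a, e i⟫) * (⟪a, e j⟫ * ⟪a, e j⟫) := by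
    intro i j
    rw [hsymm (e j) (e i)]
    ring
  have E2 : ∑ i, ∑ j,
      (S (e i) (e j) - ⟪a, e i⟫ * ⟪a, e j⟫ + 1 / 2 * ‖a‖ ^ 2 * ⟪e i, e j⟫) *
        (S (e j) (e i) - ⟪a, e j⟫ * ⟪a, e i⟫ + 1 / 2 * ‖a‖ ^ 2 * ⟪e j, e i⟫) =
      (∑ i, ∑ j, S (e i) (e j) * S (e j) (e i))
        - 2 * (∑ i, ∑ j, ⟪a, e i⟫ * ⟪a, e j⟫ * S (e i) (e j))
        + ‖a‖ ^ 2 * ‖a‖ ^ 2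
        + (‖a‖ ^ 2 * (∑ i, S (e i) (e i)) - ‖a‖ ^ 2 * ‖a‖ ^ 2
            + (n : ℝ) * (1 / 2 * ‖a‖ ^ 2) ^ 2) := by
    rw [Finset.sum_congr rfl fun i (_ : i ∈ Finset.univ) =>
      Finset.sum_congr rfl fun j (_ : j ∈ Finset.univ) => hpoint i j]
    simp only [Finset.sum_add_distrib]
    have hG : ∑ i : Fin n, ∑ j : Fin n,
        (if i = j then ‖a‖ ^ 2 * (S (e i) (e i) - ⟪a, e i⟫ * ⟪a, e i⟫) + (1 / 2 * ‖a‖ ^ 2) ^ 2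
          else 0) =
        ‖a‖ ^ 2 * (∑ i, S (e i) (e i)) - ‖a‖ ^ 2 * ‖a‖ ^ 2 + (n : ℝ) * (1 / 2 * ‖a‖ ^ 2) ^ 2 := by
      have : ∀ i : Fin n, ∑ j : Fin n,
          (if i = j then ‖a‖ ^ 2 * (S (e i) (e i) - ⟪a, e i⟫ * ⟪a, e i⟫) + (1 / 2 * ‖a‖ ^ 2) ^ 2
            else 0) =
          ‖a‖ ^ 2 * (S (e i) (e i) - ⟪a, e i⟫ * ⟪a, e i⟫) + (1 / 2 * ‖a‖ ^ 2) ^ 2 := by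
        intro i
        rw [Finset.sum_ite_eq]
        simp
      rw [Finset.sum_congr rfl fun i (_ : i ∈ Finset.univ) => this i]
      rw [Finset.sum_add_distrib, Finset.sum_const, Finset.card_univ, Fintype.card_fin,
        nsmul_eq_mul, ← Finset.mul_sum, Finset.sum_sub_distrib, hN]
      ring
    rw [hG]
    have hF : ∑ i : Fin n, ∑ j : Fin n,
        (S (e i) (e j) - ⟪a, e i⟫ * ⟪a, e j⟫) * (S (e j) (e i) - ⟪a, e j⟫ * ⟪a, e i⟫) =
        (∑ i, ∑ j, S (e i) (e j) * S (e j) (e i))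
          - 2 * (∑ i, ∑ j, ⟪a, e i⟫ * ⟪a, e j⟫ * S (e i) (e j)) + ‖a‖ ^ 2 * ‖a‖ ^ 2 := by
      rw [Finset.sum_congr rfl fun i (_ : i ∈ Finset.univ) =>
        Finset.sum_congr rfl fun j (_ : j ∈ Finset.univ) => hFexp i j]
      simp only [Finset.sum_add_distrib, Finset.sum_sub_distrib]
      have h2 : ∑ i : Fin n, ∑ j : Fin n, 2 * (⟪a, e i⟫ * ⟪a, e j⟫ * S (e i) (e j)) =
          2 * ∑ i : Fin n, ∑ j : Fin n, ⟪a, e i⟫ * ⟪a, e j⟫ * S (e i) (e j) := by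
        rw [Finset.mul_sum]
        exact Finset.sum_congr rfl fun i _ => (Finset.mul_sum _ _ _).symm
      have h3 : ∑ i : Fin n, ∑ j : Fin n, (⟪a, e i⟫ * ⟪a, e i⟫) * (⟪a, e j⟫ * ⟪a, e j⟫) =
          ‖a‖ ^ 2 * ‖a‖ ^ 2 := by
        rw [← Finset.sum_mul_sum, hN]
      rw [h2, h3]
    rw [hF]
  rw [E1, E2, bilin_expand S hbil e a]
  ring
end
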